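/- If an operator A satisfies [Δ, A] = 2D² where D commutes with Δ and with D² commuting with A appropriately — specifically for A = 𝒟_j with [Δ, 𝒟_j] = 2D_j² and [D_j², Δ] = 0 — then conjugation gives e^{−Δ/(4ω)} 𝒟_j e^{Δ/(4ω)} = 𝒟_j − (1/(2ω)) D_j² = 𝒟_j^ω (the Baker–Campbell–Hausdorff series terminates after the first commutator). -/

import Mathlib

open NormedSpace

private lemma pow_comm_aux {A : Type*} [NormedRing A] [NormedAlgebra ℝ A]
    (X k 𝒟 : A) (hXk : X * k = k * X) (hc : 𝒟 * X - X * 𝒟 = k) :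
    ∀ n : ℕ, 𝒟 * X ^ (n + 1) = X ^ (n + 1) * 𝒟 + (n + 1) • (k * X ^ n) := by
  have hDX : 𝒟 * X = X * 𝒟 + k := by
    rw [← hc]; abel
  intro n
  induction n with
  | zero => simpa using hDX
  | succ n ih =>
    have hstep : 𝒟 * X ^ (n + 1 + 1) = (𝒟 * X) * X ^ (n + 1) := by
      rw [pow_succ']; rw [← mul_assoc]
    rw [hstep, hDX, add_mul, mul_assoc, ih, mul_add, mul_smul_comm,
      show X * (k * X ^ n) = k * X ^ (n + 1) by
        rw [← mul_assoc, hXk, mul_assoc, ← pow_succ'],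
      ← mul_assoc, ← pow_succ']
    rw [succ_nsmul (k * X ^ (n + 1)) (n + 1)]
    abel

private lemma key_comm {A : Type*} [NormedRing A] [NormedAlgebra ℝ A]
    [CompleteSpace A] (X k 𝒟 : A) (hXk : X * k = k * X)
    (hc : 𝒟 * X - X * 𝒟 = k) :
    𝒟 * exp X = exp X * 𝒟 + k * exp X := by
  set L : A →L[ℝ] A := ContinuousLinearMap.mul ℝ A 𝒟 with hL
  set R : A →L[ℝ] A := (ContinuousLinearMap.mul ℝ A).flip 𝒟 with hR
  set δ : A →L[ℝ] A := L - R with hδdef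
  have hδ : ∀ a : A, δ a = 𝒟 * a - a * 𝒟 := by
    intro a
    simp [hδdef, hL, hR]
  have hsum : Summable fun n : ℕ => ((n.factorial : ℝ)⁻¹) • X ^ n :=
    expSeries_summable' (𝕂 := ℝ) X
  have hexp : exp X = ∑' n : ℕ, ((n.factorial : ℝ)⁻¹) • X ^ n := by
    rw [exp_eq_tsum ℝ]
  have hmap : δ (exp X)
      = ∑' n : ℕ, δ (((n.factorial : ℝ)⁻¹) • X ^ n) := by
    rw [hexp]; exact δ.map_tsum hsum
  have hterm : ∀ n : ℕ, δ (((n.factorial : ℝ)⁻¹) • X ^ n)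
      = (fun m : ℕ => if m = 0 then (0 : A)
          else ((m - 1).factorial : ℝ)⁻¹ • (k * X ^ (m - 1))) n := by
    intro n
    cases n with
    | zero => simp [hδ]
    | succ m =>
      have hpow := pow_comm_aux X k 𝒟 hXk hc m
      rw [δ.map_smul, hδ, hpow]
      simp only [Nat.succ_ne_zero, if_false, Nat.add_sub_cancel]
      rw [add_sub_cancel_left, ← Nat.cast_smul_eq_nsmul ℝ, smul_smul]
      congr 1
      rw [Nat.factorial_succ, Nat.cast_mul, mul_inv, Nat.cast_add, Nat.cast_one]
      have h1 : ((m : ℝ) + 1) ≠ 0 := by positivity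
      field_simp
  have hsummable2 : Summable (fun m : ℕ => if m = 0 then (0 : A)
      else ((m - 1).factorial : ℝ)⁻¹ • (k * X ^ (m - 1))) := by
    have h0 : Summable fun n : ℕ => δ (((n.factorial : ℝ)⁻¹) • X ^ n) :=
      hsum.map δ.toLinearMap.toAddMonoidHom δ.continuous
    exact (summable_congr hterm).mp h0
  have hmap2 : δ (exp X) = ∑' m : ℕ, (if m = 0 then (0 : A)
      else ((m - 1).factorial : ℝ)⁻¹ • (k * X ^ (m - 1))) := by
    rw [hmap]; exact tsum_congr hterm
  have hshift : (∑' m : ℕ, (if m = 0 then (0 : A)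
      else ((m - 1).factorial : ℝ)⁻¹ • (k * X ^ (m - 1))))
      = ∑' n : ℕ, ((n.factorial : ℝ)⁻¹) • (k * X ^ n) := by
    rw [Summable.tsum_eq_zero_add hsummable2]
    simp
  have hpull : (∑' n : ℕ, ((n.factorial : ℝ)⁻¹) • (k * X ^ n)) = k * exp X := by
    have heach : ∀ n : ℕ, ((n.factorial : ℝ)⁻¹) • (k * X ^ n)
        = (ContinuousLinearMap.mul ℝ A k) (((n.factorial : ℝ)⁻¹) • X ^ n) := by
      intro n; simp [mul_smul_comm]
    rw [tsum_congr heach, ← (ContinuousLinearMap.mul ℝ A k).map_tsum hsum, ← hexp]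
    simp
  have hfin : δ (exp X) = k * exp X := by rw [hmap2, hshift, hpull]
  rw [hδ] at hfin
  rw [← hfin]; abel

/-- if `[Δ, 𝒟] = 2D²` with `D²` commuting with `Δ` (as holds for the
Cherednik operator `𝒟 = 𝒟_j`, the rational Dunkl operator `D = D_j` and `Δ = ∑_k D_k²`),
then the Baker–Campbell–Hausdorff series for conjugation terminates after the first
commutator: `e^{−Δ/(4ω)} 𝒟 e^{Δ/(4ω)} = 𝒟 − D²/(2ω) = 𝒟^ω`. -/
theorem conj_exp_delta_cherednik {A : Type*} [NormedRing A] [NormedAlgebra ℝ A]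
    [CompleteSpace A] (ω : ℝ) (hω : ω ≠ 0) (Δ 𝒟 D : A)
    (h1 : Δ * 𝒟 - 𝒟 * Δ = 2 * D ^ 2)
    (h2 : Δ * D = D * Δ) :
    exp ((-(1 / (4 * ω))) • Δ) * 𝒟 * exp ((1 / (4 * ω)) • Δ)
      = 𝒟 - (1 / (2 * ω)) • D ^ 2 := by
  have hΔD2 : Δ * D ^ 2 = D ^ 2 * Δ := by
    have h : Δ * (D * D) = D * D * Δ := by
      rw [← mul_assoc, h2, mul_assoc, h2, ← mul_assoc]
    simpa [pow_two] using h
  set s : ℝ := 1 / (4 * ω) with hs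
  set k : A := (-(1 / (2 * ω))) • D ^ 2 with hk
  have hXk : (s • Δ) * k = k * (s • Δ) := by
    rw [hk, smul_mul_assoc, smul_mul_assoc, mul_smul_comm, mul_smul_comm, hΔD2,
      smul_comm]
  have hc : 𝒟 * (s • Δ) - (s • Δ) * 𝒟 = k := by
    rw [mul_smul_comm, smul_mul_assoc, ← smul_sub, hk]
    have h1' : Δ * 𝒟 - 𝒟 * Δ = (2 : ℝ) • D ^ 2 := by
      rw [h1, two_mul, two_smul]
    have h𝒟Δ : 𝒟 * Δ - Δ * 𝒟 = (-2 : ℝ) • D ^ 2 := by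
      rw [show 𝒟 * Δ - Δ * 𝒟 = -(Δ * 𝒟 - 𝒟 * Δ) by rw [neg_sub], h1', ← neg_smul]
    rw [h𝒟Δ, smul_smul]
    congr 1
    rw [hs]
    field_simp
    ring
  have hkey := key_comm (s • Δ) k 𝒟 hXk hc
  have hneg : (-(1 / (4 * ω))) • Δ = -(s • Δ) := by rw [hs, neg_smul]
  have hinv : exp (-(s • Δ)) * exp (s • Δ) = 1 := by
    rw [← exp_add_of_commute_of_mem_ball (𝕂 := ℝ) ((Commute.refl (s • Δ)).neg_left)
        ((expSeries_radius_eq_top ℝ A).symm ▸ edist_lt_top _ _)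
        ((expSeries_radius_eq_top ℝ A).symm ▸ edist_lt_top _ _), neg_add_cancel,
      exp_zero]
  have hkcomm : Commute k (exp (-(s • Δ))) := by
    apply Commute.exp_right
    exact (Commute.symm hXk).neg_right
  calc exp ((-(1 / (4 * ω))) • Δ) * 𝒟 * exp ((1 / (4 * ω)) • Δ)
      = exp (-(s • Δ)) * (𝒟 * exp (s • Δ)) := by
        rw [hneg, mul_assoc, hs]
    _ = exp (-(s • Δ)) * (exp (s • Δ) * 𝒟 + k * exp (s • Δ)) := by
        rw [hkey]
    _ = (exp (-(s • Δ)) * exp (s • Δ)) * 𝒟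
          + (exp (-(s • Δ)) * k) * exp (s • Δ) := by
        rw [mul_add, ← mul_assoc, ← mul_assoc]
    _ = 𝒟 + k := by
        rw [← hkcomm.eq, mul_assoc k, hinv, one_mul, mul_one]
    _ = 𝒟 - (1 / (2 * ω)) • D ^ 2 := by rw [hk, neg_smul, ← sub_eq_add_neg]
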